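/- arXiv:2003.12540 — 2 statements merged into one kernel-verified Lean document; each statement's English description precedes it below -/
import Mathlib

section
/- Let the set of black positions be a uniformly random m-subset of {1,...,n}, listed in increasing order as j_1 < j_2 < ... < j_m. Let N be the number of indices i ∈ {1,...,m-1} with j_{i+1} - j_i ≤ d. Then E[N] ≤ m·(1 - ∏_{k=1}^{d} (n-m+1-k)/(n-k)). -/
lemma count_mem_disj {α : Type*} [DecidableEq α] (A T : Finset α) (j : α) (m : ℕ)
    (hm : 1 ≤ m) (hj : j ∈ A) (hjT : j ∉ T) (hT : T ⊆ A) :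
    ((A.powersetCard m).filter (fun S => j ∈ S ∧ S ∩ T = ∅)).card
      = (A.card - 1 - T.card).choose (m - 1) := by
  have hins : insert j T ⊆ A := Finset.insert_subset hj hT
  have hcard : (A \ insert j T).card = A.card - 1 - T.card := by
    rw [Finset.card_sdiff_of_subset hins, Finset.card_insert_of_notMem hjT]
    omega
  rw [← hcard, ← Finset.card_powersetCard]
  refine Finset.card_bij' (fun S _ => S.erase j) (fun S _ => insert j S) ?hi ?hj ?li ?ri
  case li =>
    intro S hS
    simp only [Finset.mem_filter] at hS
    exact Finset.insert_erase hS.2.1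
  case ri =>
    intro S hS
    rw [Finset.mem_powersetCard] at hS
    have hjS : j ∉ S := fun h => by
      have := hS.1 h; rw [Finset.mem_sdiff] at this
      exact this.2 (Finset.mem_insert_self j T)
    exact Finset.erase_insert hjS
  · intro S hS
    simp only [Finset.mem_filter, Finset.mem_powersetCard] at hS
    obtain ⟨⟨hSA, hScard⟩, hjS, hdisj⟩ := hS
    rw [Finset.mem_powersetCard]
    constructor
    · intro x hx
      rw [Finset.mem_erase] at hx
      rw [Finset.mem_sdiff, Finset.mem_insert]
      refine ⟨hSA hx.2, ?_⟩
      rintro (h | h)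
      · exact hx.1 h
      · have : x ∈ S ∩ T := Finset.mem_inter.2 ⟨hx.2, h⟩
        rw [hdisj] at this; exact absurd this (Finset.notMem_empty x)
    · rw [Finset.card_erase_of_mem hjS, hScard]
  · intro S hS
    rw [Finset.mem_powersetCard] at hS
    obtain ⟨hSA, hScard⟩ := hS
    have hjS : j ∉ S := fun h => by
      have := hSA h; rw [Finset.mem_sdiff] at this
      exact this.2 (Finset.mem_insert_self j T)
    simp only [Finset.mem_filter, Finset.mem_powersetCard]
    refine ⟨⟨?_, ?_⟩, Finset.mem_insert_self j S, ?_⟩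
    · apply Finset.insert_subset hj
      intro x hx; exact (Finset.mem_sdiff.1 (hSA hx)).1
    · rw [Finset.card_insert_of_notMem hjS, hScard]; omega
    · rw [Finset.insert_inter_of_notMem hjT]
      apply Finset.eq_empty_of_forall_notMem
      intro x hx
      rw [Finset.mem_inter] at hx
      have := hSA hx.1
      rw [Finset.mem_sdiff, Finset.mem_insert] at this
      exact this.2 (Or.inr hx.2)


lemma prod_eq_choose (n m : ℕ) (hm : 1 ≤ m) (hmn : m ≤ n) :
    ∀ d, d ≤ n - m →
    ∏ k ∈ Finset.Icc 1 d, ((n - m + 1 - k : ℕ) : ℝ) / ((n - k : ℕ) : ℝ)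
      = (((n - 1 - d).choose (m - 1) : ℕ) : ℝ) / (((n - 1).choose (m - 1) : ℕ) : ℝ) := by
  intro d
  induction d with
  | zero =>
    intro _
    simp only [Nat.sub_zero]
    rw [Finset.Icc_eq_empty (by norm_num), Finset.prod_empty]
    have hB : 0 < (n - 1).choose (m - 1) := Nat.choose_pos (by omega)
    field_simp
  | succ d ih =>
    intro hdn
    have hB : 0 < (n - 1).choose (m - 1) := Nat.choose_pos (by omega)
    rw [Finset.prod_Icc_succ_top (by omega), ih (by omega)]
    have ha : n - 1 - d = (n - 2 - d) + 1 := by omega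
    have key : (n - 2 - d).choose (m - 1) * (n - 1 - d) = (n - 1 - d).choose (m - 1) * (n - m - d) := by
      have := Nat.choose_mul_succ_eq (n - 2 - d) (m - 1)
      rw [← ha] at this
      have h2 : n - 1 - d - (m - 1) = n - m - d := by omega
      rw [h2] at this
      exact this
    have h3 : n - m + 1 - (d + 1) = n - m - d := by omega
    have h4 : n - (d + 1) = n - 1 - d := by omega
    have h5 : n - 1 - (d + 1) = n - 2 - d := by omega
    rw [h3, h4, h5]
    have hpos : (0:ℝ) < ((n - 1 - d : ℕ) : ℝ) := by
      have : 0 < n - 1 - d := by omega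
      exact_mod_cast this
    have key' : ((n - 2 - d).choose (m - 1) : ℝ) * ((n - 1 - d : ℕ) : ℝ)
        = ((n - 1 - d).choose (m - 1) : ℝ) * ((n - m - d : ℕ) : ℝ) := by exact_mod_cast key
    have hB' : ((n-1).choose (m-1) : ℝ) ≠ 0 := by positivity
    field_simp
    nlinarith [key']


lemma gap_card_le (n m d : ℕ) (S : Finset ℕ) (hS : S ∈ (Finset.Icc 1 n).powersetCard m) :
    ((Finset.range (m - 1)).filter
      (fun i => (S.sort (· ≤ ·)).getD (i + 1) 0 - (S.sort (· ≤ ·)).getD i 0 ≤ d)).card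
    ≤ ((Finset.Icc 1 n).filter (fun j => j ∈ S ∧ ∃ j' ∈ S, j < j' ∧ j' ≤ j + d)).card := by
  rw [Finset.mem_powersetCard] at hS
  obtain ⟨hSsub, hScard⟩ := hS
  set L := S.sort (· ≤ ·) with hL
  have hlen : L.length = m := by rw [hL, Finset.length_sort, hScard]
  have hsort : L.SortedLT := Finset.sortedLT_sort S
  have hmono := hsort.strictMono_get
  apply Finset.card_le_card_of_injOn (fun i => L.getD i 0)
  · intro i hi
    simp only [Finset.mem_coe, Finset.mem_filter, Finset.mem_range] at hi
    obtain ⟨hi1, hi2⟩ := hi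
    have h1 : i < L.length := by omega
    have h2 : i + 1 < L.length := by omega
    have e1 : L.getD i 0 = L.get ⟨i, h1⟩ := by
      rw [List.getD_eq_getElem L 0 h1]; rfl
    have e2 : L.getD (i+1) 0 = L.get ⟨i+1, h2⟩ := by
      rw [List.getD_eq_getElem L 0 h2]; rfl
    have hmem1 : L.getD i 0 ∈ S := by
      rw [e1, ← Finset.mem_sort (· ≤ ·)]; exact List.get_mem _ _
    have hmem2 : L.getD (i+1) 0 ∈ S := by
      rw [e2, ← Finset.mem_sort (· ≤ ·)]; exact List.get_mem _ _
    have hlt : L.getD i 0 < L.getD (i+1) 0 := by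
      rw [e1, e2]; exact hmono (by simp)
    simp only [Finset.mem_coe, Finset.mem_filter]
    exact ⟨hSsub hmem1, hmem1, L.getD (i+1) 0, hmem2, hlt, by omega⟩
  · intro a ha b hb hab
    simp only [Finset.coe_filter, Set.mem_setOf_eq, Finset.mem_range] at ha hb
    have h1 : a < L.length := by omega
    have h2 : b < L.length := by omega
    have e1 : L.getD a 0 = L.get ⟨a, h1⟩ := by rw [List.getD_eq_getElem L 0 h1]; rfl
    have e2 : L.getD b 0 = L.get ⟨b, h2⟩ := by rw [List.getD_eq_getElem L 0 h2]; rfl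
    simp only [e1, e2] at hab
    have := hmono.injective hab
    exact congrArg Fin.val this

lemma perj (n m d : ℕ) (hm : 1 ≤ m) (j : ℕ) (hj : j ∈ Finset.Icc 1 n) :
    (((Finset.Icc 1 n).powersetCard m).filter
        (fun S => j ∈ S ∧ ∃ j' ∈ S, j < j' ∧ j' ≤ j + d)).card
      ≤ (n - 1).choose (m - 1) - (n - 1 - d).choose (m - 1) := by
  classical
  set A := Finset.Icc 1 n with hA
  have hAcard : A.card = n := by rw [hA, Nat.card_Icc]; omega
  set T := A ∩ Finset.Ioc j (j + d) with hT
  have hjT : j ∉ T := by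
    rw [hT]; simp [Finset.mem_Ioc]
  have hTsub : T ⊆ A := Finset.inter_subset_left
  have hTcard : T.card ≤ d := by
    calc T.card ≤ (Finset.Ioc j (j + d)).card :=
          Finset.card_le_card Finset.inter_subset_right
      _ = d := by rw [Nat.card_Ioc]; omega
  set F := A.powersetCard m with hF
  set X := F.filter (fun S => j ∈ S) with hX
  have split := Finset.card_filter_add_card_filter_not
    (s := X) (p := fun S => S ∩ T = ∅)
  have e1 : X.filter (fun S => S ∩ T = ∅) = F.filter (fun S => j ∈ S ∧ S ∩ T = ∅) := by
    rw [hX, Finset.filter_filter]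
  have e2 : X.filter (fun S => ¬(S ∩ T = ∅))
      = F.filter (fun S => j ∈ S ∧ ∃ j' ∈ S, j < j' ∧ j' ≤ j + d) := by
    rw [hX, Finset.filter_filter]
    apply Finset.filter_congr
    intro S hS
    rw [hF, Finset.mem_powersetCard] at hS
    simp only [and_congr_right_iff]
    intro _
    constructor
    · intro h
      obtain ⟨x, hx⟩ := Finset.nonempty_iff_ne_empty.2 h
      rw [Finset.mem_inter] at hx
      have := hx.2
      rw [hT, Finset.mem_inter, Finset.mem_Ioc] at this
      exact ⟨x, hx.1, this.2.1, this.2.2⟩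
    · rintro ⟨j', hj'S, hlt, hle⟩ hemp
      have : j' ∈ S ∩ T := by
        rw [Finset.mem_inter, hT, Finset.mem_inter, Finset.mem_Ioc]
        exact ⟨hj'S, hS.1 hj'S, hlt, hle⟩
      rw [hemp] at this
      exact Finset.notMem_empty _ this
  have c1 : (F.filter (fun S => j ∈ S ∧ S ∩ T = ∅)).card
      = (n - 1 - T.card).choose (m - 1) := by
    rw [hF, count_mem_disj A T j m hm hj hjT hTsub, hAcard]
  have c2 : X.card = (n - 1).choose (m - 1) := by
    have : X = F.filter (fun S => j ∈ S ∧ S ∩ (∅ : Finset ℕ) = ∅) := by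
      rw [hX]; congr 1; ext S; simp
    rw [this, hF, count_mem_disj A ∅ j m hm hj (Finset.notMem_empty j)
      (Finset.empty_subset A), hAcard]
    simp
  have c3 : (n - 1 - d).choose (m - 1) ≤ (n - 1 - T.card).choose (m - 1) :=
    Nat.choose_le_choose _ (by omega)
  rw [e1, e2, c2, c1] at split
  omega


/-- Black positions form a uniformly random m-subset of {1,…,n}, listed in
increasing order j_1 < … < j_m. N counts indices i with j_{i+1} - j_i ≤ d. Then
E[N] ≤ m·(1 - ∏_{k=1}^d (n-m+1-k)/(n-k)). Formulated as an average over all m-subsets. -/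
theorem stmt_6 (n m d : ℕ) (hd : 1 ≤ d) (hm : 1 ≤ m) (hmn : m ≤ n) (hnm : d ≤ n - m) :
    (∑ S ∈ (Finset.Icc 1 n).powersetCard m,
        (((Finset.range (m - 1)).filter
          (fun i => (S.sort (· ≤ ·)).getD (i + 1) 0 - (S.sort (· ≤ ·)).getD i 0 ≤ d)).card : ℝ))
        / (n.choose m : ℝ)
      ≤ m * (1 - ∏ k ∈ Finset.Icc 1 d, ((n - m + 1 - k : ℕ) : ℝ) / ((n - k : ℕ) : ℝ)) := by
  classical
  set F := (Finset.Icc 1 n).powersetCard m with hF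
  set B := (n - 1).choose (m - 1) with hB
  set B' := (n - 1 - d).choose (m - 1) with hB'
  set C := n.choose m with hC
  have hBpos : 0 < B := Nat.choose_pos (by omega)
  have hCpos : 0 < C := Nat.choose_pos hmn
  have hB'B : B' ≤ B := Nat.choose_le_choose _ (by omega)
  -- nat-level sum bound
  have natbound : (∑ S ∈ F, ((Finset.range (m - 1)).filter
        (fun i => (S.sort (· ≤ ·)).getD (i + 1) 0 - (S.sort (· ≤ ·)).getD i 0 ≤ d)).card)
      ≤ n * (B - B') := by
    calc (∑ S ∈ F, ((Finset.range (m - 1)).filter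
          (fun i => (S.sort (· ≤ ·)).getD (i + 1) 0 - (S.sort (· ≤ ·)).getD i 0 ≤ d)).card)
        ≤ ∑ S ∈ F, ((Finset.Icc 1 n).filter
            (fun j => j ∈ S ∧ ∃ j' ∈ S, j < j' ∧ j' ≤ j + d)).card := by
          apply Finset.sum_le_sum
          intro S hS
          exact gap_card_le n m d S hS
      _ = ∑ j ∈ Finset.Icc 1 n,
            (F.filter (fun S => j ∈ S ∧ ∃ j' ∈ S, j < j' ∧ j' ≤ j + d)).card := by
          simp only [Finset.card_filter]
          exact Finset.sum_comm
      _ ≤ ∑ j ∈ Finset.Icc 1 n, (B - B') := by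
          apply Finset.sum_le_sum
          intro j hj
          exact perj n m d hm j hj
      _ = n * (B - B') := by
          rw [Finset.sum_const, Nat.card_Icc, smul_eq_mul]
          congr 1
  -- key identity m * C = n * B
  have hmc : m * C = n * B := by
    have := Nat.add_one_mul_choose_eq (n - 1) (m - 1)
    have e1 : n - 1 + 1 = n := by omega
    have e2 : m - 1 + 1 = m := by omega
    rw [e1, e2] at this
    rw [hC, hB]
    linarith [this]
  have hprod := prod_eq_choose n m hm hmn d hnm
  rw [hprod, ← hB, ← hB']
  have cast1 : ((n * (B - B') : ℕ) : ℝ) = n * ((B : ℝ) - B') := by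
    push_cast [Nat.cast_sub hB'B]; ring
  have step1 : (∑ S ∈ F, (((Finset.range (m - 1)).filter
        (fun i => (S.sort (· ≤ ·)).getD (i + 1) 0 - (S.sort (· ≤ ·)).getD i 0 ≤ d)).card : ℝ))
        / (C : ℝ) ≤ (n * ((B : ℝ) - B')) / C := by
    apply div_le_div_of_nonneg_right ?_ (by positivity)
    rw [← cast1, ← Nat.cast_sum]
    exact_mod_cast natbound
  refine le_trans step1 ?_
  have hBne : (B : ℝ) ≠ 0 := by positivity
  have hCne : (C : ℝ) ≠ 0 := by positivity
  have hmc' : (m : ℝ) * C = n * B := by exact_mod_cast hmc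
  rw [div_le_iff₀ (by positivity)]
  have : (m : ℝ) * (1 - (B' : ℝ) / B) * C = (n * ((B : ℝ) - B')) := by
    field_simp
    nlinarith [hmc']
  rw [this]
end

section
/- Let the black positions be a uniformly random m-subset of {1,...,n}, and let A_{n,m,s,t} be the event that there exists a window of s consecutive positions containing at least t black balls. Then P(A_{n,m,s,t}) ≤ m·P(Y ≥ t-1), where Y is hypergeometric with population size n-1, m-1 success states, and s-1 draws. -/
open Finset


private lemma choose_swap (A a b : ℕ) :
    A.choose a * (A - a).choose b = A.choose b * (A - b).choose a := by
  rcases le_or_gt (a + b) A with h | h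
  · have h1 := Nat.choose_mul (n := A) (Nat.le_add_right a b)
    have h2 := Nat.choose_mul (n := A) (Nat.le_add_left b a)
    simp only [Nat.add_sub_cancel_left, Nat.add_sub_cancel] at h1 h2
    rw [← h1, ← h2, Nat.choose_symm_add]
  · rcases le_or_gt a A with ha | ha
    · rcases le_or_gt b A with hb | hb
      · rw [Nat.choose_eq_zero_of_lt (show A - a < b by omega),
          Nat.choose_eq_zero_of_lt (show A - b < a by omega)]
        simp
      · rw [Nat.choose_eq_zero_of_lt hb, Nat.choose_eq_zero_of_lt (show A - a < b by omega)]
        simp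
    · rw [Nat.choose_eq_zero_of_lt ha, Nat.choose_eq_zero_of_lt (show A - b < a by omega)]
      simp

private lemma keyid {N M S1 y : ℕ} (hM : M ≤ N) (hS : S1 ≤ N) (hyM : y ≤ M) (hyS : y ≤ S1) :
    N.choose S1 * (S1.choose y * (N - S1).choose (M - y))
      = N.choose M * (M.choose y * (N - M).choose (S1 - y)) := by
  have h1 := Nat.choose_mul (n := N) hyM
  have h2 := Nat.choose_mul (n := N) hyS
  have e1 : N - y - (M - y) = N - M := by omega
  have e2 : N - y - (S1 - y) = N - S1 := by omega
  calc N.choose S1 * (S1.choose y * (N - S1).choose (M - y))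
      = (N.choose S1 * S1.choose y) * (N - S1).choose (M - y) := by ring
    _ = (N.choose y * (N - y).choose (S1 - y)) * (N - S1).choose (M - y) := by rw [h2]
    _ = N.choose y * ((N - y).choose (S1 - y) * (N - y - (S1 - y)).choose (M - y)) := by
        rw [e2]; ring
    _ = N.choose y * ((N - y).choose (M - y) * (N - y - (M - y)).choose (S1 - y)) := by
        rw [← choose_swap]
    _ = (N.choose y * (N - y).choose (M - y)) * (N - M).choose (S1 - y) := by rw [e1]; ring
    _ = N.choose M * (M.choose y * (N - M).choose (S1 - y)) := by rw [← h1]; ring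

private lemma count_inter_eq {E D : Finset ℕ} (hDE : D ⊆ E) {M y : ℕ} (hy : y ≤ M) :
    ((E.powersetCard M).filter (fun T => (T ∩ D).card = y)).card
      = D.card.choose y * (E.card - D.card).choose (M - y) := by
  have hcard : ((D.powersetCard y) ×ˢ ((E \ D).powersetCard (M - y))).card
      = D.card.choose y * (E.card - D.card).choose (M - y) := by
    rw [Finset.card_product, Finset.card_powersetCard, Finset.card_powersetCard,
      Finset.card_sdiff_of_subset hDE]
  rw [← hcard]
  apply Finset.card_bij' (fun T _ => (T ∩ D, T \ D)) (fun p _ => p.1 ∪ p.2)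
  · intro T hT
    simp only [Finset.mem_filter, Finset.mem_powersetCard] at hT
    obtain ⟨⟨hTE, hTM⟩, hTy⟩ := hT
    simp only [Finset.mem_product, Finset.mem_powersetCard]
    refine ⟨⟨Finset.inter_subset_right, hTy⟩, ?_, ?_⟩
    · intro x hx
      simp only [Finset.mem_sdiff] at hx ⊢
      exact ⟨hTE hx.1, hx.2⟩
    · have := Finset.card_inter_add_card_sdiff T D
      omega
  · intro p hp
    simp only [Finset.mem_product, Finset.mem_powersetCard] at hp
    obtain ⟨⟨h1, h2⟩, h3, h4⟩ := hp
    have hdisj : Disjoint p.1 p.2 := by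
      refine Finset.disjoint_left.mpr fun x hx hx2 => ?_
      exact (Finset.mem_sdiff.mp (h3 hx2)).2 (h1 hx)
    simp only [Finset.mem_filter, Finset.mem_powersetCard]
    have hun : (p.1 ∪ p.2) ∩ D = p.1 := by
      ext x
      simp only [Finset.mem_inter, Finset.mem_union]
      constructor
      · rintro ⟨hx | hx, hxD⟩
        · exact hx
        · exact absurd hxD (Finset.mem_sdiff.mp (h3 hx)).2
      · intro hx; exact ⟨Or.inl hx, h1 hx⟩
    refine ⟨⟨Finset.union_subset (h1.trans hDE) (h3.trans Finset.sdiff_subset), ?_⟩, ?_⟩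
    · rw [Finset.card_union_of_disjoint hdisj, h2, h4]; omega
    · rw [hun, h2]
  · intro T hT
    simp only [Finset.mem_filter, Finset.mem_powersetCard] at hT
    ext x
    simp only [Finset.mem_union, Finset.mem_inter, Finset.mem_sdiff]
    tauto
  · intro p hp
    simp only [Finset.mem_product, Finset.mem_powersetCard] at hp
    obtain ⟨⟨h1, h2⟩, h3, h4⟩ := hp
    have hun : (p.1 ∪ p.2) ∩ D = p.1 := by
      ext x
      simp only [Finset.mem_inter, Finset.mem_union]
      constructor
      · rintro ⟨hx | hx, hxD⟩
        · exact hx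
        · exact absurd hxD (Finset.mem_sdiff.mp (h3 hx)).2
      · intro hx; exact ⟨Or.inl hx, h1 hx⟩
    have hun2 : (p.1 ∪ p.2) \ D = p.2 := by
      ext x
      simp only [Finset.mem_sdiff, Finset.mem_union]
      constructor
      · rintro ⟨hx | hx, hxD⟩
        · exact absurd (h1 hx) hxD
        · exact hx
      · intro hx; exact ⟨Or.inr hx, (Finset.mem_sdiff.mp (h3 hx)).2⟩
    rw [hun, hun2]

private lemma tail_decomp {E D : Finset ℕ} (M k : ℕ) :
    ((E.powersetCard M).filter (fun T => k ≤ (T ∩ D).card)).card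
      = ∑ y ∈ Finset.Icc k D.card,
          ((E.powersetCard M).filter (fun T => (T ∩ D).card = y)).card := by
  rw [Finset.card_eq_sum_card_fiberwise (f := fun T => (T ∩ D).card)
    (t := Finset.Icc k D.card) (fun T hT => by
      simp only [Finset.mem_coe, Finset.mem_filter] at hT
      simp only [Finset.mem_coe, Finset.mem_Icc]
      exact ⟨hT.2, Finset.card_le_card Finset.inter_subset_right⟩)]
  apply Finset.sum_congr rfl
  intro y hy
  simp only [Finset.mem_Icc] at hy
  rw [Finset.filter_filter]
  congr 1
  apply Finset.filter_congr
  intro T _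
  constructor
  · exact fun h => h.2
  · exact fun h => ⟨by omega, h⟩

private lemma fiber_bound {n m s : ℕ} (hm : 1 ≤ m) (hmn : m ≤ n) (hs : 1 ≤ s) (hsn : s ≤ n)
    {E D : Finset ℕ} (hDE : D ⊆ E) (hE : E.card = n - 1) (hD : D.card = s - 1) (y : ℕ) :
    ((E.powersetCard (m - 1)).filter (fun T => (T ∩ D).card = y)).card * (n - 1).choose (s - 1)
      ≤ (n - 1).choose (m - 1) * ((m - 1).choose y * (n - m).choose (s - 1 - y)) := by
  rcases le_or_gt y (m - 1) with hym | hym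
  · rcases le_or_gt y (s - 1) with hys | hys
    · rw [count_inter_eq hDE hym, hD, hE]
      have e : n - 1 - (s - 1) = n - s := by omega
      rw [e]
      apply le_of_eq
      have := keyid (N := n - 1) (M := m - 1) (S1 := s - 1) (y := y)
        (by omega) (by omega) hym hys
      calc (s - 1).choose y * (n - s).choose (m - 1 - y) * (n - 1).choose (s - 1)
          = (n - 1).choose (s - 1) * ((s - 1).choose y * (n - 1 - (s - 1)).choose (m - 1 - y)) := by
            rw [e]; ring
        _ = (n - 1).choose (m - 1) * ((m - 1).choose y * (n - 1 - (m - 1)).choose (s - 1 - y)) :=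
            keyid (by omega) (by omega) hym hys
        _ = (n - 1).choose (m - 1) * ((m - 1).choose y * (n - m).choose (s - 1 - y)) := by
            have e2 : n - 1 - (m - 1) = n - m := by omega
            rw [e2]
    · have : ((E.powersetCard (m - 1)).filter (fun T => (T ∩ D).card = y)) = ∅ := by
        apply Finset.filter_false_of_mem
        intro T hT
        have := Finset.card_le_card ((Finset.inter_subset_right : T ∩ D ⊆ D))
        omega
      rw [this]; simp
  · have : ((E.powersetCard (m - 1)).filter (fun T => (T ∩ D).card = y)) = ∅ := by
      apply Finset.filter_false_of_mem
      intro T hT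
      rw [Finset.mem_powersetCard] at hT
      have := Finset.card_le_card ((Finset.inter_subset_left : T ∩ D ⊆ T))
      omega
    rw [this]; simp

/-- Lemma 2: Black positions form a uniformly random m-subset of {1,…,n};
A_{n,m,s,t} is the event that some window of s consecutive positions contains at least t
black balls. Then P(A_{n,m,s,t}) ≤ m·P(Y ≥ t-1), where Y is hypergeometric with
population size n-1, m-1 success states and s-1 draws. -/
theorem stmt_8 (n m s t : ℕ)
    [∀ S : Finset ℕ, Decidable (∃ i ∈ Finset.Icc 1 (n - s + 1),
      t ≤ (S ∩ Finset.Icc i (i + s - 1)).card)] (hm : 1 ≤ m) (hmn : m ≤ n) (hs : 1 ≤ s) (hsn : s ≤ n)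
    (ht : 1 ≤ t) (hts : t ≤ s) :
    ((((Finset.Icc 1 n).powersetCard m).filter
        (fun S => ∃ i ∈ Finset.Icc 1 (n - s + 1),
          t ≤ (S ∩ Finset.Icc i (i + s - 1)).card)).card : ℝ) / (n.choose m : ℝ)
      ≤ m * ∑ y ∈ Finset.Icc (t - 1) (s - 1),
          ((m - 1).choose y * (n - m).choose (s - 1 - y) : ℝ) / ((n - 1).choose (s - 1) : ℝ) := by
  classical
  set Bad := (((Finset.Icc 1 n).powersetCard m).filter
      (fun S => ∃ i ∈ Finset.Icc 1 (n - s + 1),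
        t ≤ (S ∩ Finset.Icc i (i + s - 1)).card)) with hBad
  set A : ℕ := ∑ y ∈ Finset.Icc (t - 1) (s - 1),
      (m - 1).choose y * (n - m).choose (s - 1 - y) with hA
  -- Step 1: union bound over the minimal black ball in the window
  have step1 : Bad ⊆ (Finset.Icc 1 n).biUnion (fun j =>
      ((Finset.Icc 1 n).powersetCard m).filter (fun S =>
        j ∈ S ∧ t - 1 ≤ (S ∩ Finset.Icc (j + 1) (j + s - 1)).card)) := by
    intro S hS
    rw [hBad, Finset.mem_filter] at hS
    obtain ⟨hSmem, i, hi, hcard⟩ := hS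
    rw [Finset.mem_Icc] at hi
    have hne : (S ∩ Finset.Icc i (i + s - 1)).Nonempty := by
      rw [← Finset.card_pos]; omega
    set j := (S ∩ Finset.Icc i (i + s - 1)).min' hne with hj
    have hjmem := (S ∩ Finset.Icc i (i + s - 1)).min'_mem hne
    rw [Finset.mem_inter, Finset.mem_Icc] at hjmem
    have hjS : j ∈ S := hjmem.1
    have hSsub : S ⊆ Finset.Icc 1 n := (Finset.mem_powersetCard.mp hSmem).1
    have hjIcc : j ∈ Finset.Icc 1 n := hSsub hjS
    rw [Finset.mem_biUnion]
    refine ⟨j, hjIcc, Finset.mem_filter.mpr ⟨hSmem, hjS, ?_⟩⟩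
    have hsub : (S ∩ Finset.Icc i (i + s - 1)).erase j
        ⊆ S ∩ Finset.Icc (j + 1) (j + s - 1) := by
      intro x hx
      rw [Finset.mem_erase, Finset.mem_inter, Finset.mem_Icc] at hx
      obtain ⟨hxj, hxS, hxi⟩ := hx
      have hxge : j ≤ x := Finset.min'_le _ _ (by
        rw [Finset.mem_inter, Finset.mem_Icc]; exact ⟨hxS, hxi⟩)
      rw [Finset.mem_inter, Finset.mem_Icc]
      exact ⟨hxS, by omega, by omega⟩
    have := Finset.card_le_card hsub
    have hjmem' : j ∈ S ∩ Finset.Icc i (i + s - 1) := by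
      rw [Finset.mem_inter, Finset.mem_Icc]
      exact ⟨hjS, hjmem.2⟩
    rw [Finset.card_erase_of_mem hjmem'] at this
    omega
  -- Step 2: per-position bound
  have step2 : ∀ j ∈ Finset.Icc 1 n,
      (((Finset.Icc 1 n).powersetCard m).filter (fun S =>
        j ∈ S ∧ t - 1 ≤ (S ∩ Finset.Icc (j + 1) (j + s - 1)).card)).card
        * (n - 1).choose (s - 1)
      ≤ (n - 1).choose (m - 1) * A := by
    intro j hj
    rw [Finset.mem_Icc] at hj
    set E := (Finset.Icc 1 n).erase j with hE
    have hEcard : E.card = n - 1 := by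
      rw [hE, Finset.card_erase_of_mem (by rw [Finset.mem_Icc]; omega), Nat.card_Icc]
      omega
    set W := Finset.Icc (j + 1) (j + s - 1) ∩ E with hW
    have hWE : W ⊆ E := Finset.inter_subset_right
    have hWcard : W.card ≤ s - 1 := by
      calc W.card ≤ (Finset.Icc (j + 1) (j + s - 1)).card :=
            Finset.card_le_card Finset.inter_subset_left
        _ = s - 1 := by rw [Nat.card_Icc]; omega
    obtain ⟨D, hWD, hDE, hDcard⟩ :=
      Finset.exists_subsuperset_card_eq hWE hWcard (by omega)
    have stepA : (((Finset.Icc 1 n).powersetCard m).filter (fun S =>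
        j ∈ S ∧ t - 1 ≤ (S ∩ Finset.Icc (j + 1) (j + s - 1)).card)).card
        ≤ ((E.powersetCard (m - 1)).filter (fun T => t - 1 ≤ (T ∩ D).card)).card := by
      apply Finset.card_le_card_of_injOn (fun S => S.erase j)
      · intro S hS
        rw [Finset.mem_coe, Finset.mem_filter, Finset.mem_powersetCard] at hS
        obtain ⟨⟨hSsub, hScard⟩, hjS, hcond⟩ := hS
        rw [Finset.mem_coe, Finset.mem_filter, Finset.mem_powersetCard]
        refine ⟨⟨Finset.erase_subset_erase j hSsub,
          by rw [Finset.card_erase_of_mem hjS, hScard]⟩, ?_⟩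
        have hsub : S ∩ Finset.Icc (j + 1) (j + s - 1) ⊆ (S.erase j) ∩ D := by
          intro x hx
          rw [Finset.mem_inter, Finset.mem_Icc] at hx
          obtain ⟨hxS, hx1, hx2⟩ := hx
          rw [Finset.mem_inter, Finset.mem_erase]
          refine ⟨⟨by omega, hxS⟩, hWD ?_⟩
          rw [hW, Finset.mem_inter, Finset.mem_Icc, hE, Finset.mem_erase]
          exact ⟨⟨hx1, hx2⟩, by omega, hSsub hxS⟩
        have := Finset.card_le_card hsub
        beta_reduce; omega
      · intro S hS S' hS' hEq
        rw [Finset.mem_coe, Finset.mem_filter] at hS hS'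
        have h1 : S = insert j (S.erase j) := (Finset.insert_erase hS.2.1).symm
        have h2 : S' = insert j (S'.erase j) := (Finset.insert_erase hS'.2.1).symm
        simp only at hEq
        rw [h1, h2, hEq]
    calc (((Finset.Icc 1 n).powersetCard m).filter (fun S =>
            j ∈ S ∧ t - 1 ≤ (S ∩ Finset.Icc (j + 1) (j + s - 1)).card)).card
          * (n - 1).choose (s - 1)
        ≤ ((E.powersetCard (m - 1)).filter (fun T => t - 1 ≤ (T ∩ D).card)).card
          * (n - 1).choose (s - 1) := Nat.mul_le_mul_right _ stepA
      _ = ∑ y ∈ Finset.Icc (t - 1) (s - 1),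
            ((E.powersetCard (m - 1)).filter (fun T => (T ∩ D).card = y)).card
            * (n - 1).choose (s - 1) := by
          rw [tail_decomp, hDcard, Finset.sum_mul]
      _ ≤ ∑ y ∈ Finset.Icc (t - 1) (s - 1),
            (n - 1).choose (m - 1) * ((m - 1).choose y * (n - m).choose (s - 1 - y)) :=
          Finset.sum_le_sum (fun y _ => fiber_bound hm hmn hs hsn hDE hEcard hDcard y)
      _ = (n - 1).choose (m - 1) * A := by rw [hA, Finset.mul_sum]
  -- Combine to the natural number inequality
  have natFinal : Bad.card * (n - 1).choose (s - 1) ≤ m * n.choose m * A := by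
    have h1 : Bad.card ≤ ∑ j ∈ Finset.Icc 1 n,
        (((Finset.Icc 1 n).powersetCard m).filter (fun S =>
          j ∈ S ∧ t - 1 ≤ (S ∩ Finset.Icc (j + 1) (j + s - 1)).card)).card :=
      le_trans (Finset.card_le_card step1) Finset.card_biUnion_le
    have h2 : (∑ j ∈ Finset.Icc 1 n,
        (((Finset.Icc 1 n).powersetCard m).filter (fun S =>
          j ∈ S ∧ t - 1 ≤ (S ∩ Finset.Icc (j + 1) (j + s - 1)).card)).card)
        * (n - 1).choose (s - 1) ≤ n * ((n - 1).choose (m - 1) * A) := by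
      rw [Finset.sum_mul]
      calc _ ≤ ∑ _j ∈ Finset.Icc 1 n, (n - 1).choose (m - 1) * A :=
            Finset.sum_le_sum step2
        _ = n * ((n - 1).choose (m - 1) * A) := by
            rw [Finset.sum_const, Nat.card_Icc, smul_eq_mul]
            congr 1
    have h3 : n * (n - 1).choose (m - 1) = n.choose m * m := by
      obtain ⟨n', rfl⟩ : ∃ n', n = n' + 1 := ⟨n - 1, by omega⟩
      obtain ⟨m', rfl⟩ : ∃ m', m = m' + 1 := ⟨m - 1, by omega⟩
      simpa using Nat.add_one_mul_choose_eq n' m'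
    calc Bad.card * (n - 1).choose (s - 1)
        ≤ _ := Nat.mul_le_mul_right _ h1
      _ ≤ n * ((n - 1).choose (m - 1) * A) := h2
      _ = m * n.choose m * A := by rw [← Nat.mul_assoc, h3]; ring
  -- Pass to the reals
  have hCs : (0 : ℝ) < ((n - 1).choose (s - 1) : ℝ) := by
    exact_mod_cast Nat.choose_pos (by omega : s - 1 ≤ n - 1)
  have hCnm : (0 : ℝ) < (n.choose m : ℝ) := by
    exact_mod_cast Nat.choose_pos hmn
  rw [← Finset.sum_div, ← mul_div_assoc, div_le_div_iff₀ hCnm hCs]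
  have hcast : ((Bad.card * (n - 1).choose (s - 1) : ℕ) : ℝ)
      ≤ ((m * n.choose m * A : ℕ) : ℝ) := Nat.cast_le.mpr natFinal
  push_cast [hA] at hcast
  calc (Bad.card : ℝ) * ((n - 1).choose (s - 1) : ℝ) ≤ _ := hcast
    _ = ↑m * (∑ y ∈ Finset.Icc (t - 1) (s - 1),
          ((m - 1).choose y : ℝ) * ((n - m).choose (s - 1 - y) : ℝ)) * (n.choose m : ℝ) := by
        ring
end
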